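/- Let (U_t)_{t≥0} be a family of ℝ^k-valued random vectors converging in distribution as t → ∞, and let (V_t)_{t≥0} be ℝ^ℓ-valued random vectors with V_t → V in probability for some random vector V. If g : ℝ^k × ℝ^ℓ → ℝ^d is continuous, then g(U_t, V_t) − g(U_t, V) → 0 in probability as t → ∞. -/

import Mathlib

open MeasureTheory Filter ProbabilityTheory

/-- Multidimensional Kátai–Mogyoródi lemma: if `(U_t)` converges in distribution as
`t → ∞`, `(V_t)` converges in probability to `V`, and `g` is continuous, then
`g(U_t, V_t) − g(U_t, V) → 0` in probability. -/
theorem katai_mogyorodi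
    {Ω : Type*} [MeasurableSpace Ω] (P : Measure Ω) [IsProbabilityMeasure P]
    {k ℓ d : ℕ}
    (U : ℝ → Ω → (Fin k → ℝ)) (hU : ∀ t, Measurable (U t))
    (V : ℝ → Ω → (Fin ℓ → ℝ)) (hV : ∀ t, Measurable (V t))
    (Vlim : Ω → (Fin ℓ → ℝ)) (hVlim : Measurable Vlim)
    (μ : Measure (Fin k → ℝ)) [IsProbabilityMeasure μ]
    (hUconv : ∀ φ : BoundedContinuousFunction (Fin k → ℝ) ℝ,
      Tendsto (fun t => ∫ ω, φ (U t ω) ∂P) atTop (nhds (∫ x, φ x ∂μ)))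
    (hVconv : TendstoInMeasure P V atTop Vlim)
    (g : (Fin k → ℝ) → (Fin ℓ → ℝ) → (Fin d → ℝ)) (hg : Continuous fun p :
      (Fin k → ℝ) × (Fin ℓ → ℝ) => g p.1 p.2) :
    TendstoInMeasure P (fun t ω => g (U t ω) (V t ω) - g (U t ω) (Vlim ω))
      atTop (fun _ => 0) := by
  -- the pushforward measures converge weakly to μ
  have hmapP : ∀ t, IsProbabilityMeasure (P.map (U t)) :=
    fun t => Measure.isProbabilityMeasure_map (hU t).aemeasurable
  let ν : ℝ → ProbabilityMeasure (Fin k → ℝ) := fun t => ⟨P.map (U t), hmapP t⟩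
  let νlim : ProbabilityMeasure (Fin k → ℝ) := ⟨μ, inferInstance⟩
  have hν : Tendsto ν atTop (nhds νlim) := by
    rw [ProbabilityMeasure.tendsto_iff_forall_integral_tendsto]
    intro f
    have hint : ∀ t, ∫ x, f x ∂((ν t : Measure (Fin k → ℝ))) = ∫ ω, f (U t ω) ∂P := fun t =>
      integral_map (hU t).aemeasurable f.continuous.aestronglyMeasurable
    simp only [hint]
    exact hUconv f
  rw [tendstoInMeasure_iff_dist]
  intro ε hε
  rw [ENNReal.tendsto_nhds_zero]
  intro δ hδ
  have hδ3 : (0 : ENNReal) < δ / 3 := ENNReal.div_pos hδ.ne' (by simp)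
  -- choose R with μ {x | R ≤ ‖x‖} < δ/3
  have hμtail : Tendsto (fun n : ℕ => μ {x | (n : ℝ) ≤ ‖x‖}) atTop
      (nhds (μ (⋂ n : ℕ, {x | (n : ℝ) ≤ ‖x‖}))) :=
    tendsto_measure_iInter_atTop
      (fun n => (measurableSet_le measurable_const measurable_norm).nullMeasurableSet)
      (fun m n hmn x hx => by simp only [Set.mem_setOf_eq] at hx ⊢; exact le_trans (Nat.cast_le.mpr hmn) hx)
      ⟨0, measure_ne_top _ _⟩
  have hμempty : (⋂ n : ℕ, {x : Fin k → ℝ | (n : ℝ) ≤ ‖x‖}) = ∅ := by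
    ext x
    simp only [Set.mem_iInter, Set.mem_setOf_eq, Set.mem_empty_iff_false, iff_false, not_forall,
      not_le]
    exact ⟨⌊‖x‖⌋₊ + 1, by exact_mod_cast Nat.lt_floor_add_one ‖x‖⟩
  rw [hμempty, measure_empty] at hμtail
  obtain ⟨R, hR⟩ := (hμtail.eventually_lt_const hδ3).exists
  -- choose R' with P {ω | R' < ‖Vlim ω‖} < δ/3
  have hVtail : Tendsto (fun n : ℕ => P {ω | (n : ℝ) < ‖Vlim ω‖}) atTop
      (nhds (P (⋂ n : ℕ, {ω | (n : ℝ) < ‖Vlim ω‖}))) :=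
    tendsto_measure_iInter_atTop
      (fun n => (measurableSet_lt measurable_const hVlim.norm).nullMeasurableSet)
      (fun m n hmn ω hx => by simp only [Set.mem_setOf_eq] at hx ⊢; exact lt_of_le_of_lt (Nat.cast_le.mpr hmn) hx)
      ⟨0, measure_ne_top _ _⟩
  have hVempty : (⋂ n : ℕ, {ω | (n : ℝ) < ‖Vlim ω‖}) = ∅ := by
    ext ω
    simp only [Set.mem_iInter, Set.mem_setOf_eq, Set.mem_empty_iff_false, iff_false, not_forall,
      not_lt]
    exact ⟨⌈‖Vlim ω‖⌉₊, Nat.le_ceil _⟩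
  rw [hVempty, measure_empty] at hVtail
  obtain ⟨R', hR'⟩ := (hVtail.eventually_lt_const hδ3).exists
  -- portmanteau: eventually P (U t ∈ F) < δ/3 where F = {x | R ≤ ‖x‖}
  have hFclosed : IsClosed {x : Fin k → ℝ | (R : ℝ) ≤ ‖x‖} :=
    isClosed_le continuous_const continuous_norm
  have hFmeas : MeasurableSet {x : Fin k → ℝ | (R : ℝ) ≤ ‖x‖} :=
    measurableSet_le measurable_const measurable_norm
  have hlimsup : Filter.limsup (fun t => (ν t : Measure (Fin k → ℝ)) {x | (R : ℝ) ≤ ‖x‖})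
      atTop ≤ μ {x | (R : ℝ) ≤ ‖x‖} :=
    ProbabilityMeasure.limsup_measure_closed_le_of_tendsto hν hFclosed
  have hUev : ∀ᶠ t in (atTop : Filter ℝ),
      P (U t ⁻¹' {x | (R : ℝ) ≤ ‖x‖}) < δ / 3 := by
    have := eventually_lt_of_limsup_lt (lt_of_le_of_lt hlimsup hR)
    refine this.mono fun t ht => ?_
    rwa [show ((ν t : Measure (Fin k → ℝ)) {x | (R : ℝ) ≤ ‖x‖})
        = P (U t ⁻¹' {x | (R : ℝ) ≤ ‖x‖}) from Measure.map_apply (hU t) hFmeas] at ht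
  -- uniform continuity on a compact set
  have hC : IsCompact ((Metric.closedBall (0 : Fin k → ℝ) R) ×ˢ
      (Metric.closedBall (0 : Fin ℓ → ℝ) (R' + 1))) :=
    (isCompact_closedBall _ _).prod (isCompact_closedBall _ _)
  have hUC := hC.uniformContinuousOn_of_continuous hg.continuousOn
  obtain ⟨η0, hη0, hη⟩ := Metric.uniformContinuousOn_iff.mp hUC ε hε
  set η : ℝ := min η0 1 with hηdef
  have hηpos : 0 < η := lt_min hη0 one_pos
  have hVev : ∀ᶠ t in (atTop : Filter ℝ),
      P {ω | η ≤ dist (V t ω) (Vlim ω)} < δ / 3 :=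
    (tendstoInMeasure_iff_dist.mp hVconv η hηpos).eventually_lt_const hδ3
  -- combine
  filter_upwards [hUev, hVev] with t hA hCs
  have hsub : {ω | ε ≤ dist (g (U t ω) (V t ω) - g (U t ω) (Vlim ω)) 0} ⊆
      (U t ⁻¹' {x | (R : ℝ) ≤ ‖x‖}) ∪ {ω | (R' : ℝ) < ‖Vlim ω‖} ∪
        {ω | η ≤ dist (V t ω) (Vlim ω)} := by
    intro ω hω
    by_contra hmem
    simp only [Set.mem_union, Set.mem_preimage, Set.mem_setOf_eq, not_or, not_le, not_lt] at hmem
    obtain ⟨⟨h1, h2⟩, h3⟩ := hmem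
    have hp1 : ((U t ω, Vlim ω) : (Fin k → ℝ) × (Fin ℓ → ℝ)) ∈
        (Metric.closedBall (0 : Fin k → ℝ) R) ×ˢ
          (Metric.closedBall (0 : Fin ℓ → ℝ) (R' + 1)) := by
      constructor
      · exact mem_closedBall_zero_iff.mpr h1.le
      · exact mem_closedBall_zero_iff.mpr (h2.trans (by linarith))
    have hp2 : ((U t ω, V t ω) : (Fin k → ℝ) × (Fin ℓ → ℝ)) ∈
        (Metric.closedBall (0 : Fin k → ℝ) R) ×ˢ
          (Metric.closedBall (0 : Fin ℓ → ℝ) (R' + 1)) := by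
      constructor
      · exact mem_closedBall_zero_iff.mpr h1.le
      · refine mem_closedBall_zero_iff.mpr ?_
        have : ‖V t ω‖ - ‖Vlim ω‖ ≤ ‖V t ω - Vlim ω‖ := norm_sub_norm_le _ _
        have hd : ‖V t ω - Vlim ω‖ < η := by rwa [← dist_eq_norm]
        have hη1 : η ≤ 1 := min_le_right _ _
        linarith
    have hdistpair : dist ((U t ω, V t ω) : (Fin k → ℝ) × (Fin ℓ → ℝ)) (U t ω, Vlim ω) < η0 := by
      rw [Prod.dist_eq, dist_self]
      exact max_lt hη0 (lt_of_lt_of_le h3 (min_le_left _ _))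
    have := hη _ hp2 _ hp1 hdistpair
    rw [Set.mem_setOf_eq, dist_zero_right, ← dist_eq_norm] at hω
    exact absurd this (not_lt.mpr hω)
  calc P {ω | ε ≤ dist (g (U t ω) (V t ω) - g (U t ω) (Vlim ω)) 0}
      ≤ P ((U t ⁻¹' {x | (R : ℝ) ≤ ‖x‖}) ∪ {ω | (R' : ℝ) < ‖Vlim ω‖} ∪
        {ω | η ≤ dist (V t ω) (Vlim ω)}) := measure_mono hsub
    _ ≤ P (U t ⁻¹' {x | (R : ℝ) ≤ ‖x‖}) + P {ω | (R' : ℝ) < ‖Vlim ω‖} +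
        P {ω | η ≤ dist (V t ω) (Vlim ω)} :=
        le_trans (measure_union_le _ _) (add_le_add_left (measure_union_le _ _) _)
    _ ≤ δ / 3 + δ / 3 + δ / 3 := by
        exact add_le_add (add_le_add hA.le hR'.le) hCs.le
    _ = δ := ENNReal.add_thirds δ
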